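/- If D is an n×2 matrix with non-negative integer entries such that Dᵀ·D = [[5,2],[2,2]] and every column of D contains an entry equal to 1, then up to rearrangement of rows and removal of zero rows, D has rows (1,1),(1,1),(1,0),(1,0),(1,0) or rows (2,1),(1,0),(0,1). -/

import Mathlib

open Matrix Finset

lemma inj3' {α : Type*} {a b c : α} (hab : a ≠ b) (hac : a ≠ c) (hbc : b ≠ c) :
    Function.Injective ![a, b, c] := by
  intro x y h
  fin_cases x <;> fin_cases y <;> simp_all

lemma inj5' {α : Type*} {a b c d e : α} (hab : a ≠ b) (hac : a ≠ c) (had : a ≠ d)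
    (hae : a ≠ e) (hbc : b ≠ c) (hbd : b ≠ d) (hbe : b ≠ e) (hcd : c ≠ d)
    (hce : c ≠ e) (hde : d ≠ e) :
    Function.Injective ![a, b, c, d, e] := by
  intro x y h
  fin_cases x <;> fin_cases y <;> simp_all

theorem stmt10 (n : ℕ) (D : Matrix (Fin n) (Fin 2) ℕ)
    (hD : Dᵀ * D = !![5, 2; 2, 2])
    (hcol : ∀ j : Fin 2, ∃ i : Fin n, D i j = 1) :
    (∃ f : Fin 5 → Fin n, Function.Injective f ∧
      (∀ i j, D (f i) j = !![1,1; 1,1; 1,0; 1,0; 1,0] i j) ∧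
      (∀ i : Fin n, (∀ k, f k ≠ i) → ∀ j, D i j = 0)) ∨
    (∃ f : Fin 3 → Fin n, Function.Injective f ∧
      (∀ i j, D (f i) j = !![2,1; 1,0; 0,1] i j) ∧
      (∀ i : Fin n, (∀ k, f k ≠ i) → ∀ j, D i j = 0)) := by
  have h00 : ∑ i, D i 0 * D i 0 = 5 := by
    have := congrFun (congrFun hD 0) 0
    simpa [Matrix.mul_apply, Matrix.transpose_apply] using this
  have h01 : ∑ i, D i 0 * D i 1 = 2 := by
    have := congrFun (congrFun hD 0) 1
    simpa [Matrix.mul_apply, Matrix.transpose_apply] using this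
  have h11 : ∑ i, D i 1 * D i 1 = 2 := by
    have := congrFun (congrFun hD 1) 1
    simpa [Matrix.mul_apply, Matrix.transpose_apply] using this
  have hb1 : ∀ i, D i 1 ≤ 1 := by
    intro i
    by_contra h
    have hle : D i 1 * D i 1 ≤ ∑ i, D i 1 * D i 1 :=
      Finset.single_le_sum (f := fun i => D i 1 * D i 1)
        (fun i _ => Nat.zero_le _) (mem_univ i)
    rw [h11] at hle
    nlinarith
  have hb0 : ∀ i, D i 0 ≤ 2 := by
    intro i
    by_contra h
    have hle : D i 0 * D i 0 ≤ ∑ i, D i 0 * D i 0 :=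
      Finset.single_le_sum (f := fun i => D i 0 * D i 0)
        (fun i _ => Nat.zero_le _) (mem_univ i)
    rw [h00] at hle
    nlinarith
  set A := univ.filter (fun i : Fin n => D i 1 = 1) with hA
  set B1 := univ.filter (fun i : Fin n => D i 0 = 1) with hB1
  set B2 := univ.filter (fun i : Fin n => D i 0 = 2) with hB2
  have memA : ∀ i, i ∈ A ↔ D i 1 = 1 := by intro i; simp [hA]
  have memB1 : ∀ i, i ∈ B1 ↔ D i 0 = 1 := by intro i; simp [hB1]
  have memB2 : ∀ i, i ∈ B2 ↔ D i 0 = 2 := by intro i; simp [hB2]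
  -- card of A
  have hAcard : A.card = 2 := by
    have e : ∑ i, D i 1 * D i 1 = ∑ i, (if D i 1 = 1 then 1 else 0) := by
      apply Finset.sum_congr rfl
      intro i _
      have := hb1 i
      interval_cases (D i 1) <;> simp
    rw [e, ← Finset.card_filter] at h11
    exact h11
  -- counting for column 0
  have hBcount : 4 * B2.card + B1.card = 5 := by
    have e : ∑ i, D i 0 * D i 0
        = ∑ i, ((if D i 0 = 2 then 4 else 0) + (if D i 0 = 1 then 1 else 0)) := by
      apply Finset.sum_congr rfl
      intro i _
      have := hb0 i
      interval_cases (D i 0) <;> simp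
    rw [e, Finset.sum_add_distrib] at h00
    have e2 : ∑ i : Fin n, (if D i 0 = 2 then (4:ℕ) else 0) = 4 * B2.card := by
      rw [← Finset.sum_filter]
      simp [mul_comm, hB2]
    have e1 : ∑ i : Fin n, (if D i 0 = 1 then (1:ℕ) else 0) = B1.card := by
      rw [← Finset.card_filter]
    rw [e2, e1] at h00
    exact h00
  -- cross sum
  have hcross : ∑ i ∈ A, D i 0 = 2 := by
    rw [Finset.sum_filter]
    refine Eq.trans ?_ h01
    apply Finset.sum_congr rfl
    intro i _
    have := hb1 i
    interval_cases (D i 1) <;> simp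
  obtain ⟨a, b, hab, hAeq⟩ := Finset.card_eq_two.mp hAcard
  have ha1 : D a 1 = 1 := (memA a).mp (by rw [hAeq]; simp)
  have hb1' : D b 1 = 1 := (memA b).mp (by rw [hAeq]; simp)
  have hpair : D a 0 + D b 0 = 2 := by
    rw [hAeq, Finset.sum_pair hab] at hcross
    exact hcross
  have hcases : (B2.card = 0 ∧ B1.card = 5) ∨ (B2.card = 1 ∧ B1.card = 1) := by omega
  rcases hcases with ⟨h2c, h1c⟩ | ⟨h2c, h1c⟩
  · -- five rows of 1 in column 0
    left
    have hB2e : B2 = ∅ := Finset.card_eq_zero.mp h2c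
    have hle1 : ∀ i, D i 0 ≤ 1 := by
      intro i
      have h2 : D i 0 ≠ 2 := by
        intro h
        have : i ∈ B2 := (memB2 i).mpr h
        simp [hB2e] at this
      have := hb0 i
      omega
    have ha0 : D a 0 = 1 := by have := hle1 a; have := hle1 b; omega
    have hb0' : D b 0 = 1 := by have := hle1 a; have := hle1 b; omega
    have hAsub : A ⊆ B1 := by
      intro i hi
      rw [hAeq] at hi
      rcases Finset.mem_insert.mp hi with h | h
      · subst h; exact (memB1 _).mpr ha0
      · rw [Finset.mem_singleton] at h; subst h; exact (memB1 _).mpr hb0'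
    have hsd : (B1 \ A).card = 3 := by
      rw [Finset.card_sdiff_of_subset hAsub, h1c, hAcard]
    obtain ⟨c, d, e, hcd, hce, hde, hsdeq⟩ := Finset.card_eq_three.mp hsd
    have hcB : c ∈ B1 \ A := by rw [hsdeq]; simp
    have hdB : d ∈ B1 \ A := by rw [hsdeq]; simp
    have heB : e ∈ B1 \ A := by rw [hsdeq]; simp
    have hc0 : D c 0 = 1 := (memB1 c).mp (Finset.mem_sdiff.mp hcB).1
    have hd0 : D d 0 = 1 := (memB1 d).mp (Finset.mem_sdiff.mp hdB).1
    have he0 : D e 0 = 1 := (memB1 e).mp (Finset.mem_sdiff.mp heB).1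
    have hc1 : D c 1 = 0 := by
      have := (Finset.mem_sdiff.mp hcB).2
      rw [memA] at this
      have := hb1 c; omega
    have hd1 : D d 1 = 0 := by
      have := (Finset.mem_sdiff.mp hdB).2
      rw [memA] at this
      have := hb1 d; omega
    have he1 : D e 1 = 0 := by
      have := (Finset.mem_sdiff.mp heB).2
      rw [memA] at this
      have := hb1 e; omega
    have hdist : ∀ x ∈ ({c, d, e} : Finset (Fin n)), a ≠ x ∧ b ≠ x := by
      intro x hx
      have hxA : x ∉ A := by
        rw [← hsdeq] at hx
        exact (Finset.mem_sdiff.mp hx).2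
      constructor <;> rintro rfl <;> apply hxA <;> rw [hAeq] <;> simp
    have hac := hdist c (by simp)
    have had := hdist d (by simp)
    have hae := hdist e (by simp)
    refine ⟨![a, b, c, d, e], inj5' hab hac.1 had.1 hae.1 hac.2 had.2 hae.2 hcd hce hde, ?_, ?_⟩
    · intro i j
      fin_cases i <;> fin_cases j <;>
        simp [ha0, ha1, hb0', hb1', hc0, hc1, hd0, hd1, he0, he1, Matrix.vecHead, Matrix.vecTail]
    · intro i hi j
      have hia : i ≠ a := fun h => hi 0 (by simp [h])
      have hib : i ≠ b := fun h => hi 1 (by simp [h])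
      have hic : i ≠ c := fun h => hi 2 (by simp [h])
      have hid : i ≠ d := fun h => hi 3 (by simp [h])
      have hie : i ≠ e := fun h => hi 4 (by simp [h])
      have hiA : i ∉ A := by rw [hAeq]; simp [hia, hib]
      have hiB : i ∉ B1 := by
        intro h
        have hmem : i ∈ A ∪ (B1 \ A) := by
          by_cases hA' : i ∈ A
          · exact Finset.mem_union_left _ hA'
          · exact Finset.mem_union_right _ (Finset.mem_sdiff.mpr ⟨h, hA'⟩)
        rcases Finset.mem_union.mp hmem with h' | h'
        · exact hiA h'
        · rw [hsdeq] at h'; simp [hic, hid, hie] at h'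
      have hi1 : D i 1 = 0 := by
        rw [memA] at hiA; have := hb1 i; omega
      have hi0 : D i 0 = 0 := by
        rw [memB1] at hiB; have := hle1 i; omega
      fin_cases j <;> simp [hi0, hi1]
  · -- one 2 and one 1 in column 0
    right
    obtain ⟨p, hpeq⟩ := Finset.card_eq_one.mp h2c
    obtain ⟨q, hqeq⟩ := Finset.card_eq_one.mp h1c
    have hq0 : D q 0 = 1 := (memB1 q).mp (by rw [hqeq]; simp)
    have key : ∀ x y : Fin n, x ≠ y → D x 1 = 1 → D y 1 = 1 → D x 0 = 2 → D y 0 = 0 →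
        (∀ i, i ≠ x → D i 1 = 1 → i = y) →
        (∃ f : Fin 3 → Fin n, Function.Injective f ∧
          (∀ i j, D (f i) j = !![2,1; 1,0; 0,1] i j) ∧
          (∀ i : Fin n, (∀ k, f k ≠ i) → ∀ j, D i j = 0)) := by
      intro x y hxy hx1 hy1 hx0 hy0 honly
      have hxp : x = p := by
        have : x ∈ B2 := (memB2 x).mpr hx0
        rwa [hpeq, Finset.mem_singleton] at this
      have hxq : x ≠ q := by intro h; rw [h, hq0] at hx0; omega
      have hyq : y ≠ q := by intro h; rw [h, hq0] at hy0; omega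
      have hq1 : D q 1 = 0 := by
        have hne : D q 1 ≠ 1 := fun h => hyq ((honly q (Ne.symm hxq) h).symm)
        have := hb1 q; omega
      refine ⟨![x, q, y], inj3' hxq hxy (Ne.symm hyq), ?_, ?_⟩
      · intro i j
        fin_cases i <;> fin_cases j <;> simp [hx0, hx1, hq0, hq1, hy0, hy1, Matrix.vecHead, Matrix.vecTail]
      · intro i hi j
        have hix : i ≠ x := fun h => hi 0 (by simp [h])
        have hiq : i ≠ q := fun h => hi 1 (by simp [h])
        have hiy : i ≠ y := fun h => hi 2 (by simp [h])
        have hi1 : D i 1 = 0 := by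
          have : D i 1 ≠ 1 := fun h => hiy (honly i hix h)
          have := hb1 i; omega
        have hi0 : D i 0 = 0 := by
          have h2 : D i 0 ≠ 2 := by
            intro h
            have hip : i ∈ B2 := (memB2 i).mpr h
            rw [hpeq, Finset.mem_singleton] at hip
            exact hix (hip.trans hxp.symm)
          have h1 : D i 0 ≠ 1 := by
            intro h
            have hiq' : i ∈ B1 := (memB1 i).mpr h
            rw [hqeq, Finset.mem_singleton] at hiq'
            exact hiq hiq'
          have := hb0 i; omega
        fin_cases j <;> simp [hi0, hi1]
    have honlyA : ∀ u v : Fin n, A = {u, v} → ∀ i, i ≠ u → D i 1 = 1 → i = v := by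
      intro u v hA' i hiu hi1
      have : i ∈ A := (memA i).mpr hi1
      rw [hA'] at this
      rcases Finset.mem_insert.mp this with h | h
      · exact absurd h hiu
      · exact Finset.mem_singleton.mp h
    have hd3 : (D a 0 = 2 ∧ D b 0 = 0) ∨ (D b 0 = 2 ∧ D a 0 = 0) ∨
        (D a 0 = 1 ∧ D b 0 = 1) := by
      have := hb0 a; have := hb0 b; omega
    rcases hd3 with ⟨h1, h2⟩ | ⟨h1, h2⟩ | ⟨h1, h2⟩
    · exact key a b hab ha1 hb1' h1 h2 (honlyA a b hAeq)
    · refine key b a hab.symm hb1' ha1 h1 h2 (honlyA b a ?_)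
      rw [hAeq, Finset.pair_comm]
    · exfalso
      have haq : a = q := by
        have : a ∈ B1 := (memB1 a).mpr h1
        rwa [hqeq, Finset.mem_singleton] at this
      have hbq : b = q := by
        have : b ∈ B1 := (memB1 b).mpr h2
        rwa [hqeq, Finset.mem_singleton] at this
      exact hab (haq.trans hbq.symm)
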